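/- arXiv:0807.0608 — 2 statements merged into one kernel-verified Lean document; each statement's English description precedes it below -/
import Mathlib

section
/- Every good word w ∈ W can be uniquely represented as w = x_i R_{w_1} R_{w_2} … R_{w_m} = (…((x_i w_1) w_2) … w_m) for some i and some m ≥ 0, where all the words w_j are good and w_1 ≤ w_2 ≤ … ≤ w_m. -/
namespace RS

/-- The degree of a nonassociative word. -/
def deg {X : Type*} : FreeMagma X → ℕ
  | .of _ => 1
  | .mul u v => deg u + deg v

/-- The order on nonassociative words: `u < v` if `d u < d v`; words of equal degree 1 are
compared in `X`; words `u = u₁u₂`, `v = v₁v₂` of equal degree `≥ 2` are compared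
lexicographically. -/
def wlt {X : Type*} [LinearOrder X] : FreeMagma X → FreeMagma X → Prop
  | .of a, .of b => a < b
  | .of _, .mul _ _ => True
  | .mul _ _, .of _ => False
  | .mul u₁ u₂, .mul v₁ v₂ =>
      deg (FreeMagma.mul u₁ u₂) < deg (FreeMagma.mul v₁ v₂) ∨
        (deg (FreeMagma.mul u₁ u₂) = deg (FreeMagma.mul v₁ v₂) ∧
          (wlt u₁ v₁ ∨ (u₁ = v₁ ∧ wlt u₂ v₂)))

/-- `u ≤ v` on nonassociative words. -/
def wle {X : Type*} [LinearOrder X] (u v : FreeMagma X) : Prop := wlt u v ∨ u = v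

/-- A word is good if it contains no subword `(rs)t` with `s > t`. -/
def IsGood {X : Type*} [LinearOrder X] : FreeMagma X → Prop
  | .of _ => True
  | .mul (.of _) v => IsGood v
  | .mul (.mul u₁ u₂) v =>
      IsGood (FreeMagma.mul u₁ u₂) ∧ IsGood v ∧ ¬ wlt v u₂

/-- Evaluation of a nonassociative word at values `x` in a magma `A`. -/
def evalWord {X A : Type*} [Mul A] (x : X → A) : FreeMagma X → A
  | .of a => x a
  | .mul u v => evalWord x u * evalWord x v

/-- Data exhibiting a nonunital nonassociative `k`-algebra `A` as the free right-symmetric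
algebra `RS⟨x_1,…,x_n⟩`: `A` satisfies the right-symmetric identity and the images of the good
words form a `k`-linear basis (Segal's theorem). -/
structure FreeRSData (k : Type*) [Field k] (n : ℕ) (A : Type*)
    [NonUnitalNonAssocRing A] [Module k A] where
  rightSymm : ∀ a b c : A, (a * b) * c - a * (b * c) = (a * c) * b - a * (c * b)
  x : Fin n → A
  basis : Module.Basis {w : FreeMagma (Fin n) // IsGood w} k A
  basis_eq : ∀ w : {w : FreeMagma (Fin n) // IsGood w}, basis w = evalWord x w.1

/-- `w` is the leading word of `f`: it is a good word occurring in the representation of `f`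
in the basis of good words, and every other good word occurring there is smaller. -/
def IsLeadingWord {k : Type*} [Field k] {n : ℕ} {A : Type*} [NonUnitalNonAssocRing A]
    [Module k A] (D : FreeRSData k n A) (f : A) (w : FreeMagma (Fin n)) : Prop :=
  ∃ hw : IsGood w,
    (⟨w, hw⟩ : {u : FreeMagma (Fin n) // IsGood u}) ∈ (D.basis.repr f).support ∧
      ∀ u ∈ (D.basis.repr f).support, u.1 ≠ w → wlt u.1 w

/-- The left-normed word `x R_{w_1} ⋯ R_{w_m} = (…((x w_1) w_2) … w_m)`. -/
def leftNormed {X : Type*} (a : FreeMagma X) (l : List (FreeMagma X)) : FreeMagma X :=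
  l.foldl FreeMagma.mul a

/-- The degree of a word in the variable `a`. -/
def countVar {X : Type*} [DecidableEq X] (a : X) : FreeMagma X → ℕ
  | .of b => if b = a then 1 else 0
  | .mul u v => countVar a u + countVar a v

/-- The two-sided ideal of the nonunital nonassociative `k`-algebra `A` generated by `f`. -/
def idealGen (k : Type*) [Field k] {A : Type*} [NonUnitalNonAssocRing A] [Module k A]
    (f : A) : Submodule k A :=
  sInf {I : Submodule k A | f ∈ I ∧ ∀ a : A, ∀ y ∈ I, a * y ∈ I ∧ y * a ∈ I}

/-- A pair of (nonzero) elements `f, g` is reducible if there is a good word `s` in a single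
variable with `s(f̄) = ḡ` or `s(ḡ) = f̄`. -/
def Reducible {k : Type*} [Field k] {n : ℕ} {A : Type*} [NonUnitalNonAssocRing A]
    [Module k A] (D : FreeRSData k n A) (f g : A) : Prop :=
  ∃ wf wg : FreeMagma (Fin n), IsLeadingWord D f wf ∧ IsLeadingWord D g wg ∧
    ∃ s : FreeMagma Unit, IsGood s ∧
      (evalWord (fun _ => wf) s = wg ∨ evalWord (fun _ => wg) s = wf)

/-- An elementary automorphism: it fixes all generators but one, which is sent to
`α x_i + f` with `α ≠ 0` and `f` in the subalgebra generated by the other generators. -/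
def IsElementary {k : Type*} [Field k] {n : ℕ} {A : Type*} [NonUnitalNonAssocRing A]
    [Module k A] [SMulCommClass k A A] [IsScalarTower k A A]
    (D : FreeRSData k n A) (e : A →ₙₐ[k] A) : Prop :=
  Function.Bijective e ∧ ∃ i : Fin n,
    (∀ j : Fin n, j ≠ i → e (D.x j) = D.x j) ∧
    ∃ (α : k) (f : A), α ≠ 0 ∧
      f ∈ NonUnitalAlgebra.adjoin k (D.x '' {j | j ≠ i}) ∧
      e (D.x i) = α • D.x i + f


/-- Decomposition of a word into its leftmost letter and the list of right factors. -/
def decomp {X : Type*} : FreeMagma X → X × List (FreeMagma X)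
  | .of i => (i, [])
  | .mul u v => ((decomp u).1, (decomp u).2 ++ [v])

lemma leftNormed_concat {X : Type*} (a : FreeMagma X) (l : List (FreeMagma X))
    (v : FreeMagma X) : leftNormed a (l ++ [v]) = FreeMagma.mul (leftNormed a l) v := by
  simp [leftNormed]

lemma leftNormed_decomp {X : Type*} : ∀ w : FreeMagma X,
    leftNormed (.of (decomp w).1) (decomp w).2 = w
  | .of i => rfl
  | .mul u v => by
    rw [decomp, leftNormed_concat, leftNormed_decomp u]

lemma leftNormed_inj {X : Type*} : ∀ (l₁ l₂ : List (FreeMagma X)) (i₁ i₂ : X),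
    leftNormed (.of i₁) l₁ = leftNormed (.of i₂) l₂ → (i₁, l₁) = (i₂, l₂) := by
  intro l₁
  induction l₁ using List.reverseRecOn with
  | nil =>
    intro l₂ i₁ i₂ h
    rcases l₂.eq_nil_or_concat with rfl | ⟨l', v, rfl⟩
    · simp only [leftNormed, List.foldl_nil] at h
      cases h; rfl
    · rw [List.concat_eq_append, leftNormed_concat] at h
      exact absurd h (by simp [leftNormed])
  | append_singleton l u ih =>
    intro l₂ i₁ i₂ h
    rcases l₂.eq_nil_or_concat with rfl | ⟨l', v, rfl⟩
    · rw [leftNormed_concat] at h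
      exact absurd h (by simp [leftNormed])
    · rw [List.concat_eq_append, leftNormed_concat, leftNormed_concat] at h
      injection h with h1 h2
      have := ih l' i₁ i₂ h1
      simp only [Prod.mk.injEq, List.concat_eq_append] at this ⊢
      exact ⟨this.1, by rw [this.2, h2]⟩

lemma wlt_trichotomy {X : Type*} [LinearOrder X] : ∀ u v : FreeMagma X,
    wlt u v ∨ u = v ∨ wlt v u := by
  intro u
  induction u using FreeMagma.rec with
  | of a =>
    intro v
    cases v with
    | of b =>
      rcases lt_trichotomy a b with h | h | h
      · exact Or.inl h
      · exact Or.inr (Or.inl (by rw [h]))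
      · exact Or.inr (Or.inr h)
    | mul v₁ v₂ => exact Or.inl trivial
  | mul u₁ u₂ ih₁ ih₂ =>
    intro v
    cases v with
    | of b => exact Or.inr (Or.inr trivial)
    | mul v₁ v₂ =>
      rcases Nat.lt_trichotomy (deg (FreeMagma.mul u₁ u₂)) (deg (FreeMagma.mul v₁ v₂))
        with h | h | h
      · exact Or.inl (Or.inl h)
      · rcases ih₁ v₁ with h1 | rfl | h1
        · exact Or.inl (Or.inr ⟨h, Or.inl h1⟩)
        · rcases ih₂ v₂ with h2 | rfl | h2
          · exact Or.inl (Or.inr ⟨h, Or.inr ⟨rfl, h2⟩⟩)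
          · exact Or.inr (Or.inl rfl)
          · exact Or.inr (Or.inr (Or.inr ⟨h.symm, Or.inr ⟨rfl, h2⟩⟩))
        · exact Or.inr (Or.inr (Or.inr ⟨h.symm, Or.inl h1⟩))
      · exact Or.inr (Or.inr (Or.inl h))

lemma decomp_good {X : Type*} [LinearOrder X] : ∀ w : FreeMagma X, IsGood w →
    (∀ u ∈ (decomp w).2, IsGood u) ∧ List.Chain' wle (decomp w).2 := by
  intro w
  induction w using FreeMagma.rec with
  | of i => intro _; exact ⟨by simp [decomp], by simp [decomp, List.Chain']⟩
  | mul u v ihu ihv =>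
    intro hw
    cases u with
    | of i =>
      have hv : IsGood v := hw
      refine ⟨?_, ?_⟩ <;> simp [decomp, hv, List.Chain']
    | mul u₁ u₂ =>
      obtain ⟨hgu, hgv, hnlt⟩ := hw
      obtain ⟨hall, hchain⟩ := ihu hgu
      constructor
      · intro x hx
        rw [decomp] at hx
        rcases List.mem_append.1 hx with hx | hx
        · exact hall x hx
        · rw [List.mem_singleton] at hx; subst hx; exact hgv
      · rw [decomp, List.Chain', List.isChain_append]
        refine ⟨hchain, List.isChain_singleton _, ?_⟩
        intro x hx y hy
        rw [decomp, List.getLast?_concat, Option.mem_some_iff] at hx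
        simp only [List.head?_cons, Option.mem_some_iff] at hy
        subst hx
        subst hy
        rcases wlt_trichotomy u₂ v with h | h | h
        · exact Or.inl h
        · exact Or.inr h
        · exact absurd h hnlt

/-- Lemma 2.3: every good word `w` can be uniquely written as
`w = x_i R_{w_1} R_{w_2} ⋯ R_{w_m}` with all `w_j` good and `w_1 ≤ w_2 ≤ … ≤ w_m`. -/
theorem statement2 (n : ℕ) (w : FreeMagma (Fin n)) (hw : IsGood w) :
    ∃! p : Fin n × List (FreeMagma (Fin n)),
      w = leftNormed (.of p.1) p.2 ∧ (∀ u ∈ p.2, IsGood u) ∧ List.Chain' wle p.2 := by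
  obtain ⟨hall, hchain⟩ := decomp_good w hw
  refine ⟨decomp w, ⟨(leftNormed_decomp w).symm, hall, hchain⟩, ?_⟩
  rintro ⟨i, l⟩ ⟨heq, -, -⟩
  exact leftNormed_inj l (decomp w).2 i (decomp w).1 (heq.symm.trans (leftNormed_decomp w).symm)

end RS
end

section
/- If u and v are good words with u < v, then the leading words of the products uv and vu in the free right-symmetric algebra A satisfy overline{uv} < overline{vu}. -/
namespace RS

section Aux
set_option linter.unusedSectionVars false
set_option maxHeartbeats 1000000

variable {X : Type*} [LinearOrder X]

lemma deg_pos (u : FreeMagma X) : 1 ≤ deg u := by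
  induction u using FreeMagma.rec with
  | of a => simp [deg]
  | mul u v ihu ihv => simp [deg]; omega

lemma wlt_of_deg_lt {u v : FreeMagma X} (h : deg u < deg v) : wlt u v := by
  cases u with
  | of a => cases v with
    | of b => simp [deg] at h
    | mul v₁ v₂ => trivial
  | mul u₁ u₂ => cases v with
    | of b => have := deg_pos u₁; have := deg_pos u₂; simp [deg] at h ⊢; omega
    | mul v₁ v₂ => exact Or.inl h

lemma deg_le_of_wlt {u v : FreeMagma X} (h : wlt u v) : deg u ≤ deg v := by
  cases u with
  | of a => cases v with
    | of b => exact le_refl _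
    | mul v₁ v₂ => have := deg_pos v₁; have := deg_pos v₂; simp [deg]; omega
  | mul u₁ u₂ => cases v with
    | of b => exact absurd h (by simp [wlt])
    | mul v₁ v₂ => rcases h with h | ⟨h, _⟩; · omega
                   · omega

lemma wlt_irrefl (u : FreeMagma X) : ¬ wlt u u := by
  induction u using FreeMagma.rec with
  | of a => simp [wlt]
  | mul u v ihu ihv =>
    intro h
    rcases h with h | ⟨_, h | ⟨_, h⟩⟩
    · omega
    · exact ihu h
    · exact ihv h

lemma wlt_trans : ∀ {u v w : FreeMagma X}, wlt u v → wlt v w → wlt u w := by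
  intro u
  induction u using FreeMagma.rec with
  | of a =>
    intro v w h1 h2
    cases v with
    | of b => cases w with
      | of c => exact lt_trans h1 h2
      | mul w₁ w₂ => trivial
    | mul v₁ v₂ => cases w with
      | of c => exact absurd h2 (by simp [wlt])
      | mul w₁ w₂ => trivial
  | mul u₁ u₂ ih₁ ih₂ =>
    intro v w h1 h2
    cases v with
    | of b => exact absurd h1 (by simp [wlt])
    | mul v₁ v₂ => cases w with
      | of c => exact absurd h2 (by simp [wlt])
      | mul w₁ w₂ =>
        rcases h1 with h1 | ⟨e1, h1⟩
        · rcases h2 with h2 | ⟨e2, _⟩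
          · exact Or.inl (lt_trans h1 h2)
          · exact Or.inl (e2 ▸ h1)
        · rcases h2 with h2 | ⟨e2, h2⟩
          · exact Or.inl (e1 ▸ h2)
          · refine Or.inr ⟨e1.trans e2, ?_⟩
            rcases h1 with h1 | ⟨e1', h1⟩
            · rcases h2 with h2 | ⟨e2', h2⟩
              · exact Or.inl (ih₁ h1 h2)
              · exact Or.inl (e2' ▸ h1)
            · rcases h2 with h2 | ⟨e2', h2⟩
              · exact Or.inl (e1' ▸ h2)
              · exact Or.inr ⟨e1'.trans e2', ih₂ h1 h2⟩

lemma wlt_asymm {u v : FreeMagma X} (h : wlt u v) : ¬ wlt v u :=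
  fun h' => wlt_irrefl u (wlt_trans h h')

open scoped Classical in
/-- The leading word of the product of good words `p` and `q`. -/
noncomputable def N : FreeMagma X → FreeMagma X → FreeMagma X
  | .of a, q => (FreeMagma.of a).mul q
  | .mul p₁ p₂, q =>
      if wlt q p₂ then (N p₁ q).mul p₂ else (FreeMagma.mul p₁ p₂).mul q

lemma N_of (a : X) (q : FreeMagma X) : N (FreeMagma.of a) q = (FreeMagma.of a).mul q := rfl

lemma N_mul_pos {p₁ p₂ q : FreeMagma X} (h : wlt q p₂) :
    N (FreeMagma.mul p₁ p₂) q = (N p₁ q).mul p₂ := by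
  rw [N, if_pos h]

lemma N_mul_neg {p₁ p₂ q : FreeMagma X} (h : ¬ wlt q p₂) :
    N (FreeMagma.mul p₁ p₂) q = (FreeMagma.mul p₁ p₂).mul q := by
  rw [N, if_neg h]

lemma N_deg (p q : FreeMagma X) : deg (N p q) = deg p + deg q := by
  induction p using FreeMagma.rec with
  | of a => simp [N_of, deg]
  | mul p₁ p₂ ih₁ ih₂ =>
    by_cases h : wlt q p₂
    · rw [N_mul_pos h]; simp [deg, ih₁]; omega
    · rw [N_mul_neg h]; rfl

lemma N_exists_mul (p q : FreeMagma X) : ∃ c d, N p q = FreeMagma.mul c d := by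
  cases p with
  | of a => exact ⟨_, _, rfl⟩
  | mul p₁ p₂ =>
    by_cases h : wlt q p₂
    · exact ⟨_, _, N_mul_pos h⟩
    · exact ⟨_, _, N_mul_neg h⟩

lemma N_left_deg : ∀ (p q c d : FreeMagma X), N p q = FreeMagma.mul c d → deg c ≤ deg p := by
  intro p q c d h
  cases p with
  | of a => rw [N_of] at h; cases h; rfl
  | mul p₁ p₂ =>
    by_cases hb : wlt q p₂
    · rw [N_mul_pos hb] at h
      cases h
      have := deg_le_of_wlt hb
      have := N_deg p₁ q
      simp [deg]; omega
    · rw [N_mul_neg hb] at h; cases h; rfl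

/-- the condition needed for `u.mul v` to be good, beyond goodness of `u` and `v`. -/
def goodTail : FreeMagma X → FreeMagma X → Prop
  | .of _, _ => True
  | .mul _ u₂, v => ¬ wlt v u₂

lemma isGood_mul_iff (u v : FreeMagma X) :
    IsGood (FreeMagma.mul u v) ↔ IsGood u ∧ IsGood v ∧ goodTail u v := by
  cases u with
  | of a => simp [IsGood, goodTail]
  | mul u₁ u₂ => simp [IsGood, goodTail]

lemma goodTail_N {p q z : FreeMagma X} (h1 : goodTail p z) (h2 : ¬ wlt z q) :
    goodTail (N p q) z := by
  cases p with
  | of a => rw [N_of]; exact h2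
  | mul p₁ p₂ =>
    by_cases hb : wlt q p₂
    · rw [N_mul_pos hb]; exact h1
    · rw [N_mul_neg hb]; exact h2

lemma N_isGood {p q : FreeMagma X} (hp : IsGood p) (hq : IsGood q) : IsGood (N p q) := by
  induction p using FreeMagma.rec with
  | of a => rw [N_of, isGood_mul_iff]; exact ⟨trivial, hq, trivial⟩
  | mul p₁ p₂ ih₁ ih₂ =>
    have hp' := (isGood_mul_iff p₁ p₂).mp hp
    by_cases hb : wlt q p₂
    · rw [N_mul_pos hb, isGood_mul_iff]
      exact ⟨ih₁ hp'.1, hp'.2.1, goodTail_N hp'.2.2 (wlt_asymm hb)⟩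
    · rw [N_mul_neg hb, isGood_mul_iff]
      exact ⟨hp, hq, hb⟩

lemma wlt_mul_left {a b c d : FreeMagma X}
    (hdeg : deg (FreeMagma.mul a b) = deg (FreeMagma.mul c d))
    (h : wlt a c) : wlt (FreeMagma.mul a b) (FreeMagma.mul c d) := Or.inr ⟨hdeg, Or.inl h⟩

lemma wlt_mul_right {a b d : FreeMagma X}
    (hdeg : deg (FreeMagma.mul a b) = deg (FreeMagma.mul a d))
    (h : wlt b d) : wlt (FreeMagma.mul a b) (FreeMagma.mul a d) := Or.inr ⟨hdeg, Or.inr ⟨rfl, h⟩⟩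

/-- Lemma M: `N q w < q z` whenever `w < z`. -/
lemma N_lt_mul_right : ∀ (q : FreeMagma X) {w z : FreeMagma X}, wlt w z →
    wlt (N q w) (q.mul z) := by
  intro q
  induction q using FreeMagma.rec with
  | of a =>
    intro w z h
    rw [N_of]
    rcases lt_or_eq_of_le (deg_le_of_wlt h) with hd | hd
    · exact wlt_of_deg_lt (by simp [deg]; omega)
    · exact wlt_mul_right (by simp [deg, hd]) h
  | mul q₁ q₂ ih₁ ih₂ =>
    intro w z h
    by_cases hb : wlt w q₂
    · rw [N_mul_pos hb]
      rcases lt_or_eq_of_le (deg_le_of_wlt h) with hd | hd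
      · exact wlt_of_deg_lt (by have := N_deg q₁ w; simp [deg] at *; omega)
      · exact wlt_mul_left (by have := N_deg q₁ w; simp [deg] at *; omega) (ih₁ hb)
    · rw [N_mul_neg hb]
      rcases lt_or_eq_of_le (deg_le_of_wlt h) with hd | hd
      · exact wlt_of_deg_lt (by simp [deg]; omega)
      · exact wlt_mul_right (by simp [deg]; omega) h

/-- Lemma M1: `N w z < W z` whenever `w < W`. -/
lemma N_lt_mul_left : ∀ (w : FreeMagma X) {W z : FreeMagma X}, wlt w W →
    wlt (N w z) (W.mul z) := by
  intro w
  induction w using FreeMagma.rec with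
  | of a =>
    intro W z h
    rw [N_of]
    rcases lt_or_eq_of_le (deg_le_of_wlt h) with hd | hd
    · exact wlt_of_deg_lt (by simp [deg] at *; omega)
    · cases W with
      | of b => exact wlt_mul_left (by simp [deg]) h
      | mul W₁ W₂ => exfalso; have := deg_pos W₁; have := deg_pos W₂; simp [deg] at hd; omega
  | mul w₁ w₂ ih₁ ih₂ =>
    intro W z h
    rcases lt_or_eq_of_le (deg_le_of_wlt h) with hd | hd
    · exact wlt_of_deg_lt (by have := N_deg (w₁.mul w₂) z; simp [deg] at *; omega)
    · by_cases hb : wlt z w₂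
      · rw [N_mul_pos hb]
        cases W with
        | of b => exfalso; have := deg_pos w₁; have := deg_pos w₂; simp [deg] at hd; omega
        | mul W₁ W₂ =>
          rcases lt_or_eq_of_le (deg_le_of_wlt hb) with hz | hz
          · refine wlt_mul_left ?_ (wlt_of_deg_lt ?_)
            · have := N_deg w₁ z; simp [deg] at *; omega
            · have := N_deg w₁ z; simp [deg] at *; omega
          · refine wlt_mul_left ?_ (wlt_trans (N_lt_mul_right w₁ hb) h)
            have := N_deg w₁ z; simp [deg] at *; omega
      · rw [N_mul_neg hb]
        cases W with
        | of b => exfalso; have := deg_pos w₁; have := deg_pos w₂; simp [deg] at hd; omega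
        | mul W₁ W₂ => exact wlt_mul_left (by simp [deg] at *; omega) h

/-- Lemma M2. -/
lemma N_lt_N_mul {p₁ p₂ q z : FreeMagma X} (hz : deg z ≤ deg p₂ + deg q) :
    wlt (N p₁ z) ((N p₁ q).mul p₂) := by
  rcases lt_or_eq_of_le hz with hd | hd
  · exact wlt_of_deg_lt (by have := N_deg p₁ z; have := N_deg p₁ q; simp [deg] at *; omega)
  · obtain ⟨c, d, hcd⟩ := N_exists_mul p₁ z
    rw [hcd]
    refine wlt_mul_left ?_ (wlt_of_deg_lt ?_)
    · have h1 := N_deg p₁ z; have h2 := N_deg p₁ q; rw [hcd] at h1; simp [deg] at *; omega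
    · have h3 := N_left_deg p₁ z c d hcd
      have h2 := N_deg p₁ q
      have := deg_pos q
      omega

/-- If `u < v` then `uv` is good along with `u,v`, i.e. `N u v = u.mul v`. -/
lemma N_eq_mul_of_wlt {u v : FreeMagma X} (h : wlt u v) : N u v = u.mul v := by
  cases u with
  | of a => exact N_of a v
  | mul u₁ u₂ =>
    refine N_mul_neg fun hb => ?_
    have h2 := deg_le_of_wlt (wlt_trans h hb)
    have := deg_pos u₁
    simp [deg] at h2
    omega

/-- Final comparison: `N u v < N v u` when `u < v`. -/
lemma N_lt_N_swap {u v : FreeMagma X} (h : wlt u v) : wlt (N u v) (N v u) := by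
  rw [N_eq_mul_of_wlt h]
  cases v with
  | of b =>
    rw [N_of]
    exact wlt_mul_left (by simp [deg]; omega) h
  | mul v₁ v₂ =>
    by_cases hb : wlt u v₂
    · rw [N_mul_pos hb]
      refine wlt_mul_left ?_ (wlt_of_deg_lt ?_)
      · have := N_deg v₁ u; simp [deg] at *; omega
      · have := N_deg v₁ u; have := deg_pos v₁; omega
    · rw [N_mul_neg hb]
      exact wlt_mul_left (by simp [deg]; omega) h

end Aux

section Rank
set_option linter.unusedSectionVars false
variable {n : ℕ}

/-- All words of degree at most `d` (possibly with extra words of larger degree). -/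
def wordsLe (n : ℕ) : ℕ → List (FreeMagma (Fin n))
  | 0 => []
  | d + 1 => ((List.finRange n).map FreeMagma.of) ++
      ((wordsLe n d).flatMap fun u => (wordsLe n d).map fun v => FreeMagma.mul u v)

lemma mem_wordsLe : ∀ (d : ℕ) (w : FreeMagma (Fin n)), deg w ≤ d → w ∈ wordsLe n d := by
  intro d
  induction d with
  | zero => intro w h; have := deg_pos w; omega
  | succ d ih =>
    intro w h
    cases w with
    | of a =>
      rw [wordsLe]
      exact List.mem_append_left _ (List.mem_map.mpr ⟨a, List.mem_finRange a, rfl⟩)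
    | mul u v =>
      have hu := deg_pos u; have hv := deg_pos v
      simp [deg] at h
      rw [wordsLe]
      refine List.mem_append_right _ ?_
      rw [List.mem_flatMap]
      exact ⟨u, ih u (by omega), List.mem_map.mpr ⟨v, ih v (by omega), rfl⟩⟩

open scoped Classical in
/-- Rank of a word among words of its degree. -/
noncomputable def rank (w : FreeMagma (Fin n)) : ℕ :=
  ((wordsLe n (deg w)).toFinset.filter fun z => wlt z w).card

lemma rank_lt_rank {w p : FreeMagma (Fin n)} (hd : deg w = deg p) (h : wlt w p) :
    rank w < rank p := by
  classical
  rw [rank, rank, hd]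
  refine Finset.card_lt_card ⟨?_, fun hsub => ?_⟩
  · intro z hz
    simp only [Finset.mem_filter] at hz ⊢
    exact ⟨hz.1, wlt_trans hz.2 h⟩
  · have hw : w ∈ (wordsLe n (deg p)).toFinset.filter fun z => wlt z p := by
      simp only [Finset.mem_filter, List.mem_toFinset]
      exact ⟨mem_wordsLe _ w (by omega), h⟩
    have := hsub hw
    simp only [Finset.mem_filter] at this
    exact wlt_irrefl w this.2

end Rank

section Main
set_option linter.unusedSectionVars false
set_option maxHeartbeats 1000000
variable {k : Type*} [Field k] {n : ℕ} {A : Type*} [NonUnitalNonAssocRing A]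
  [Module k A] [SMulCommClass k A A] [IsScalarTower k A A]

@[simp] lemma evalWord_mul (x : Fin n → A) (u v : FreeMagma (Fin n)) :
    evalWord x (FreeMagma.mul u v) = evalWord x u * evalWord x v := rfl

lemma basis_congr (D : FreeRSData k n A) {w w' : FreeMagma (Fin n)} (h : w = w')
    {hw : IsGood w} {hw' : IsGood w'} : D.basis ⟨w, hw⟩ = D.basis ⟨w', hw'⟩ := by
  subst h; rfl

lemma eval_eq_basis (D : FreeRSData k n A) {w : FreeMagma (Fin n)} (hw : IsGood w) :
    evalWord D.x w = D.basis ⟨w, hw⟩ := (D.basis_eq ⟨w, hw⟩).symm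

/-- The span of the good words smaller than `w`. -/
def lowSpan (D : FreeRSData k n A) (w : FreeMagma (Fin n)) : Submodule k A :=
  Submodule.span k (⇑D.basis '' {z : {w' : FreeMagma (Fin n) // IsGood w'} | wlt z.1 w})

lemma basis_mem_lowSpan (D : FreeRSData k n A) {z w : FreeMagma (Fin n)} (hz : IsGood z)
    (h : wlt z w) : D.basis ⟨z, hz⟩ ∈ lowSpan D w :=
  Submodule.subset_span ⟨⟨z, hz⟩, h, rfl⟩

lemma lowSpan_mono (D : FreeRSData k n A) {w w' : FreeMagma (Fin n)} (h : wlt w w') :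
    lowSpan D w ≤ lowSpan D w' :=
  Submodule.span_mono (Set.image_mono fun z hz => wlt_trans hz h)

/-- Main lemma: the product of (the values of) two good words is the corresponding
basis element of `N p q` plus lower terms. -/
theorem mainP (D : FreeRSData k n A) :
    ∀ (t dp r : ℕ) (p q : FreeMagma (Fin n)), deg p + deg q = t → deg p = dp → rank p = r →
    ∀ (hp : IsGood p) (hq : IsGood q) (hg : IsGood (N p q)),
    evalWord D.x p * evalWord D.x q - D.basis ⟨N p q, hg⟩ ∈ lowSpan D (N p q) := by
  intro t
  induction t using Nat.strong_induction_on with | _ t iht =>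
  intro dp
  induction dp using Nat.strong_induction_on with | _ dp ihdp =>
  intro r
  induction r using Nat.strong_induction_on with | _ r ihr =>
  intro p q hT hD hR hp hq hg
  -- combined induction hypothesis
  have IH : ∀ p' q' : FreeMagma (Fin n),
      (deg p' + deg q' < deg p + deg q ∨
        (deg p' + deg q' = deg p + deg q ∧
          (deg p' < deg p ∨ (deg p' = deg p ∧ rank p' < rank p)))) →
      ∀ (hp' : IsGood p') (hq' : IsGood q') (hg' : IsGood (N p' q')),
      evalWord D.x p' * evalWord D.x q' - D.basis ⟨N p' q', hg'⟩ ∈ lowSpan D (N p' q') := by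
    intro p' q' hm hp' hq' hg'
    subst hT hD hR
    rcases hm with hlt | ⟨heq, hlt | ⟨heq2, hlt⟩⟩
    · exact iht _ hlt _ _ _ _ rfl rfl rfl hp' hq' hg'
    · exact ihdp _ hlt _ _ _ (by omega) rfl rfl hp' hq' hg'
    · exact ihr _ hlt _ _ (by omega) (by omega) rfl hp' hq' hg'
  clear iht ihdp ihr hT hD hR
  cases p with
  | of a =>
    have hN : N (FreeMagma.of a) q = (FreeMagma.of a).mul q := N_of a q
    have hgm : IsGood ((FreeMagma.of a).mul q) := hN ▸ hg
    rw [basis_congr D hN (hw' := hgm)]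
    have he : evalWord D.x (FreeMagma.of a) * evalWord D.x q
        = D.basis ⟨(FreeMagma.of a).mul q, hgm⟩ := by
      rw [← evalWord_mul, eval_eq_basis D hgm]
    rw [he, sub_self]
    rw [hN]
    exact zero_mem _
  | mul p₁ p₂ =>
    obtain ⟨hp1, hp2, htail⟩ := (isGood_mul_iff p₁ p₂).mp hp
    by_cases hb : wlt q p₂
    case neg =>
      -- the product is a good word
      have hN : N (FreeMagma.mul p₁ p₂) q = (FreeMagma.mul p₁ p₂).mul q := N_mul_neg hb
      have hgm : IsGood ((FreeMagma.mul p₁ p₂).mul q) := hN ▸ hg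
      rw [basis_congr D hN (hw' := hgm)]
      have he : evalWord D.x (FreeMagma.mul p₁ p₂) * evalWord D.x q
          = D.basis ⟨(FreeMagma.mul p₁ p₂).mul q, hgm⟩ := by
        rw [← evalWord_mul, eval_eq_basis D hgm]
      rw [he, sub_self, hN]
      exact zero_mem _
    case pos =>
      set P1 := evalWord D.x p₁ with hP1
      set P2 := evalWord D.x p₂ with hP2
      set Q := evalWord D.x q with hQ
      have hW : IsGood (N p₁ q) := N_isGood hp1 hq
      have hZ : IsGood (N p₂ q) := N_isGood hp2 hq
      have hY : IsGood (N q p₂) := N_isGood hq hp2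
      have hWp2 : IsGood ((N p₁ q).mul p₂) := by
        rw [isGood_mul_iff]
        exact ⟨hW, hp2, goodTail_N htail (wlt_asymm hb)⟩
      have hN : N (FreeMagma.mul p₁ p₂) q = (N p₁ q).mul p₂ := N_mul_pos hb
      rw [basis_congr D hN (hw' := hWp2), hN]
      have hd1 : 1 ≤ deg p₁ := deg_pos _
      have hd2 : 1 ≤ deg p₂ := deg_pos _
      have hdq : 1 ≤ deg q := deg_pos _
      have hdp : deg (FreeMagma.mul p₁ p₂) = deg p₁ + deg p₂ := rfl
      -- three inductive product expansions
      have hIH1 : P1 * Q - D.basis ⟨N p₁ q, hW⟩ ∈ lowSpan D (N p₁ q) :=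
        IH p₁ q (Or.inl (by omega)) hp1 hq hW
      have hIH2 : P2 * Q - D.basis ⟨N p₂ q, hZ⟩ ∈ lowSpan D (N p₂ q) :=
        IH p₂ q (Or.inl (by omega)) hp2 hq hZ
      have hIH3 : Q * P2 - D.basis ⟨N q p₂, hY⟩ ∈ lowSpan D (N q p₂) :=
        IH q p₂ (Or.inl (by omega)) hq hp2 hY
      -- claim (†): multiplying `P1` by a basis word of degree ≤ deg p₂ + deg q lands low
      have dagger : ∀ (z : FreeMagma (Fin n)) (hz : IsGood z), deg z ≤ deg p₂ + deg q →
          P1 * (D.basis ⟨z, hz⟩ : A) ∈ lowSpan D ((N p₁ q).mul p₂) := by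
        intro z hz hdz
        have hgz : IsGood (N p₁ z) := N_isGood hp1 hz
        have hm : P1 * evalWord D.x z - D.basis ⟨N p₁ z, hgz⟩ ∈ lowSpan D (N p₁ z) := by
          refine IH p₁ z ?_ hp1 hz hgz
          rcases lt_or_eq_of_le hdz with h' | h'
          · exact Or.inl (by omega)
          · exact Or.inr ⟨by omega, Or.inl (by omega)⟩
        have hlt : wlt (N p₁ z) ((N p₁ q).mul p₂) := N_lt_N_mul hdz
        rw [← eval_eq_basis D hz]
        have := add_mem (lowSpan_mono D hlt hm)
          (basis_mem_lowSpan D hgz hlt)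
        rwa [sub_add_cancel] at this
      -- (‡): multiplying `P1` by anything spanned by low words lands low
      have leftmul : ∀ (W' : FreeMagma (Fin n)), deg W' ≤ deg p₂ + deg q →
          ∀ g ∈ lowSpan D W', P1 * g ∈ lowSpan D ((N p₁ q).mul p₂) := by
        intro W' hdW' g hgmem
        refine Submodule.span_induction ?_ ?_ ?_ ?_ hgmem
        · rintro _ ⟨⟨z, hz⟩, hzlt, rfl⟩
          exact dagger z hz (le_trans (deg_le_of_wlt hzlt) hdW')
        · rw [mul_zero]; exact zero_mem _
        · intro a b _ _ ha hb; rw [mul_add]; exact add_mem ha hb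
        · intro c a _ ha; rw [mul_smul_comm]; exact Submodule.smul_mem _ c ha
      -- (i) : P1 * (P2 * Q) is low
      have memi : P1 * (P2 * Q) ∈ lowSpan D ((N p₁ q).mul p₂) := by
        have h1 : P2 * Q = D.basis ⟨N p₂ q, hZ⟩ + (P2 * Q - D.basis ⟨N p₂ q, hZ⟩) := by abel
        rw [h1, mul_add]
        refine add_mem (dagger _ hZ (by rw [N_deg])) ?_
        exact leftmul (N p₂ q) (by rw [N_deg]) _ hIH2
      -- (iii) : P1 * (Q * P2) is low
      have memiii : P1 * (Q * P2) ∈ lowSpan D ((N p₁ q).mul p₂) := by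
        have h1 : Q * P2 = D.basis ⟨N q p₂, hY⟩ + (Q * P2 - D.basis ⟨N q p₂, hY⟩) := by abel
        rw [h1, mul_add]
        refine add_mem (dagger _ hY (by rw [N_deg]; omega)) ?_
        exact leftmul (N q p₂) (by rw [N_deg]; omega) _ hIH3
      -- (ii) : f₁ * P2 is low
      have memii : (P1 * Q - D.basis ⟨N p₁ q, hW⟩) * P2 ∈ lowSpan D ((N p₁ q).mul p₂) := by
        refine Submodule.span_induction ?_ ?_ ?_ ?_ hIH1
        · rintro _ ⟨⟨w, hw⟩, hwlt, rfl⟩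
          simp only [Set.mem_setOf_eq] at hwlt
          have hgw : IsGood (N w p₂) := N_isGood hw hp2
          have hm : evalWord D.x w * P2 - D.basis ⟨N w p₂, hgw⟩ ∈ lowSpan D (N w p₂) := by
            refine IH w p₂ ?_ hw hp2 hgw
            have hdw : deg w ≤ deg (N p₁ q) := deg_le_of_wlt hwlt
            rw [N_deg] at hdw
            rcases lt_or_eq_of_le hdw with h' | h'
            · exact Or.inl (by omega)
            · have hwp : wlt w (FreeMagma.mul p₁ p₂) :=
                wlt_trans hwlt (N_lt_mul_right p₁ hb)
              have := deg_le_of_wlt hwp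
              rw [hdp] at this
              rcases lt_or_eq_of_le this with h'' | h''
              · exact Or.inr ⟨by omega, Or.inl (by omega)⟩
              · exact Or.inr ⟨by omega, Or.inr ⟨by omega,
                  rank_lt_rank (by omega) hwp⟩⟩
          have hlt : wlt (N w p₂) ((N p₁ q).mul p₂) := N_lt_mul_left w hwlt
          rw [← eval_eq_basis D hw]
          have := add_mem (lowSpan_mono D hlt hm) (basis_mem_lowSpan D hgw hlt)
          rwa [sub_add_cancel] at this
        · rw [zero_mul]; exact zero_mem _
        · intro a b _ _ ha hb; rw [add_mul]; exact add_mem ha hb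
        · intro c a _ ha; rw [smul_mul_assoc]; exact Submodule.smul_mem _ c ha
      -- assemble, using the right-symmetric identity
      have hWmul : (D.basis ⟨N p₁ q, hW⟩ : A) * P2 = D.basis ⟨(N p₁ q).mul p₂, hWp2⟩ := by
        rw [← eval_eq_basis D hW, ← eval_eq_basis D hWp2]
        rfl
      have hrs := D.rightSymm P1 P2 Q
      have key : evalWord D.x (FreeMagma.mul p₁ p₂) * Q - D.basis ⟨(N p₁ q).mul p₂, hWp2⟩
          = P1 * (P2 * Q) + (P1 * Q - D.basis ⟨N p₁ q, hW⟩) * P2 - P1 * (Q * P2) := by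
        rw [evalWord_mul, ← hP1, ← hP2, sub_mul, hWmul]
        have h2 : P1 * P2 * Q = P1 * (P2 * Q) + ((P1 * Q) * P2 - P1 * (Q * P2)) := by
          rw [← hrs]; abel
        rw [h2]; abel
      rw [key]
      exact sub_mem (add_mem memi memii) memiii

lemma isLeadingWord_add (D : FreeRSData k n A) {w : FreeMagma (Fin n)} (hw : IsGood w)
    {f : A} (hf : f ∈ lowSpan D w) :
    IsLeadingWord D (D.basis ⟨w, hw⟩ + f) w := by
  have hsupp : ↑(D.basis.repr f).support
      ⊆ {z : {w' : FreeMagma (Fin n) // IsGood w'} | wlt z.1 w} :=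
    Module.Basis.repr_support_subset_of_mem_span D.basis _ hf
  have hrep : D.basis.repr (D.basis ⟨w, hw⟩ + f)
      = Finsupp.single ⟨w, hw⟩ 1 + D.basis.repr f := by
    rw [map_add, Module.Basis.repr_self]
  have hfw : D.basis.repr f ⟨w, hw⟩ = 0 := by
    by_contra h
    have : (⟨w, hw⟩ : {w' : FreeMagma (Fin n) // IsGood w'}) ∈ (D.basis.repr f).support :=
      Finsupp.mem_support_iff.mpr h
    exact wlt_irrefl w (hsupp this)
  refine ⟨hw, ?_, ?_⟩
  · rw [Finsupp.mem_support_iff, hrep]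
    simp [hfw]
  · intro u hu hne
    rw [Finsupp.mem_support_iff, hrep] at hu
    have hsingle : Finsupp.single (⟨w, hw⟩ : {w' : FreeMagma (Fin n) // IsGood w'})
        (1 : k) u = 0 := by
      rw [Finsupp.single_apply, if_neg]
      intro h
      exact hne (congrArg Subtype.val h).symm
    rw [Finsupp.add_apply, hsingle, zero_add] at hu
    exact hsupp (Finsupp.mem_support_iff.mpr hu)

lemma isLeadingWord_eval_mul (D : FreeRSData k n A) {u v : FreeMagma (Fin n)}
    (hu : IsGood u) (hv : IsGood v) :
    IsLeadingWord D (evalWord D.x u * evalWord D.x v) (N u v) := by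
  have hg : IsGood (N u v) := N_isGood hu hv
  have hm := mainP D (deg u + deg v) (deg u) (rank u) u v rfl rfl rfl hu hv hg
  have : evalWord D.x u * evalWord D.x v
      = D.basis ⟨N u v, hg⟩ + (evalWord D.x u * evalWord D.x v - D.basis ⟨N u v, hg⟩) := by
    abel
  rw [this]
  exact isLeadingWord_add D hg hm

end Main

/-- Lemma 2.8: if `u` and `v` are good words with `u < v`, then
`overline{uv} < overline{vu}` in the free right-symmetric algebra. -/
theorem statement7 (k : Type*) [Field k] (n : ℕ) (A : Type*) [NonUnitalNonAssocRing A]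
    [Module k A] [SMulCommClass k A A] [IsScalarTower k A A]
    (D : FreeRSData k n A) (u v : FreeMagma (Fin n))
    (hu : IsGood u) (hv : IsGood v) (huv : wlt u v) :
    ∃ a b : FreeMagma (Fin n),
      IsLeadingWord D (evalWord D.x (u.mul v)) a ∧
      IsLeadingWord D (evalWord D.x (v.mul u)) b ∧ wlt a b := by
  refine ⟨N u v, N v u, ?_, ?_, N_lt_N_swap huv⟩
  · rw [evalWord_mul]; exact isLeadingWord_eval_mul D hu hv
  · rw [evalWord_mul]; exact isLeadingWord_eval_mul D hv hu

end RS
end
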